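/- For any real p ∈ [0,1] and integers 0 ≤ k ≤ n, the binomial tail satisfies ∑_{i=k}^{n} C(n,i) p^i (1-p)^{n-i} ≤ C(n,k) p^k. -/

import Mathlib

theorem binomial_tail_bound (p : ℝ) (hp0 : 0 ≤ p) (hp1 : p ≤ 1) (k n : ℕ) (hkn : k ≤ n) :
    ∑ i ∈ Finset.Icc k n, (n.choose i : ℝ) * p ^ i * (1 - p) ^ (n - i)
      ≤ (n.choose k : ℝ) * p ^ k := by
  have h1p : 0 ≤ 1 - p := by linarith
  have key : ∑ i ∈ Finset.Icc k n, (n.choose i : ℝ) * p ^ i * (1 - p) ^ (n - i)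
      ≤ ∑ i ∈ Finset.Icc k n,
        (n.choose k : ℝ) * p ^ k * (((n - k).choose (i - k) : ℝ) * p ^ (i - k) * (1 - p) ^ ((n - k) - (i - k))) := by
    apply Finset.sum_le_sum
    intro i hi
    simp only [Finset.mem_Icc] at hi
    obtain ⟨hki, hin⟩ := hi
    have hpow : p ^ i = p ^ k * p ^ (i - k) := by
      rw [← pow_add, Nat.add_sub_cancel' hki]
    have hsub : n - i = (n - k) - (i - k) := by omega
    have hchoose : (n.choose i : ℝ) ≤ (n.choose k : ℝ) * ((n - k).choose (i - k) : ℝ) := by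
      have := Nat.choose_mul (n := n) hki
      have h1 : n.choose i ≤ n.choose i * i.choose k :=
        Nat.le_mul_of_pos_right _ (Nat.choose_pos hki)
      rw [this] at h1
      exact_mod_cast h1
    calc (n.choose i : ℝ) * p ^ i * (1 - p) ^ (n - i)
        ≤ ((n.choose k : ℝ) * ((n - k).choose (i - k) : ℝ)) * p ^ i * (1 - p) ^ (n - i) := by
          apply mul_le_mul_of_nonneg_right (mul_le_mul_of_nonneg_right hchoose (by positivity)) (by positivity)
      _ = (n.choose k : ℝ) * p ^ k * (((n - k).choose (i - k) : ℝ) * p ^ (i - k) * (1 - p) ^ ((n - k) - (i - k))) := by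
          rw [hpow, hsub]; ring
  refine key.trans ?_
  rw [← Finset.mul_sum]
  have hsum : ∑ i ∈ Finset.Icc k n,
      (((n - k).choose (i - k) : ℝ) * p ^ (i - k) * (1 - p) ^ ((n - k) - (i - k)))
      = ∑ j ∈ Finset.range (n - k + 1),
      (((n - k).choose j : ℝ) * p ^ j * (1 - p) ^ ((n - k) - j)) := by
    apply Finset.sum_nbij' (fun i => i - k) (fun j => j + k)
    all_goals intros; simp_all [Finset.mem_Icc, Finset.mem_range]; try omega
  rw [hsum]
  have hbin : ∑ j ∈ Finset.range (n - k + 1),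
      (((n - k).choose j : ℝ) * p ^ j * (1 - p) ^ ((n - k) - j)) = 1 := by
    have := add_pow p (1 - p) (n - k)
    simp only [add_sub_cancel, one_pow] at this
    conv_rhs => rw [this]
    exact Finset.sum_congr rfl fun j _ => by ring
  rw [hbin, mul_one]
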